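/- If n ≥ 1 and A ⊆ (ℤ/4ℤ)^n is progression-free, then |A| < (n + 2)·4^(γn), where γ = sup{ (1/2)(H(1/2 − ε) + H(2ε)) : 0 < ε < 1/4 } ≈ 0.926. -/

import Mathlib

/-- A set `A` in an additively written abelian group is progression-free if there do not
exist pairwise distinct `a, b, c ∈ A` with `a + b = 2c`. -/
def ProgressionFree {G : Type*} [AddCommGroup G] (A : Set G) : Prop :=
  ¬ ∃ a ∈ A, ∃ b ∈ A, ∃ c ∈ A, a ≠ b ∧ a ≠ c ∧ b ≠ c ∧ a + b = c + c

/-- The binary entropy function `H(x) = -x log₂ x - (1-x) log₂ (1-x)`. -/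
noncomputable def binEnt (x : ℝ) : ℝ :=
  -x * Real.logb 2 x - (1 - x) * Real.logb 2 (1 - x)

/-- `γ = sup { (1/2)(H(1/2-ε) + H(2ε)) : 0 < ε < 1/4 } ≈ 0.926`. -/
noncomputable def gam : ℝ :=
  sSup ((fun ε : ℝ => (1 / 2) * (binEnt (1 / 2 - ε) + binEnt (2 * ε))) ''
    Set.Ioo 0 (1 / 4))

namespace CLP
open Finset
open scoped Classical
open scoped Classical

abbrev Vec (n : ℕ) := Fin n → ZMod 2
abbrev Fn (n : ℕ) := Vec n → ZMod 2

variable {n : ℕ}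

def chi (T : Finset (Fin n)) : Fn n := fun w => ∏ i ∈ T, w i

def dlt (y : Vec n) : Fn n := fun w => ∏ i, (1 + w i + y i)

lemma zmod2_fact (a b : ZMod 2) : 1 + a + b = if a = b then 1 else 0 := by
  revert a b; decide

lemma dlt_apply (y w : Vec n) : dlt y w = if w = y then 1 else 0 := by
  unfold dlt
  by_cases h : w = y
  · subst h; simp [zmod2_fact]
  · rw [if_neg h]
    obtain ⟨i, hi⟩ := Function.ne_iff.1 h
    apply Finset.prod_eq_zero (Finset.mem_univ i)
    rw [zmod2_fact]; simp [hi]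

lemma dlt_self (y : Vec n) : dlt y y = 1 := by rw [dlt_apply]; simp

lemma dlt_ne (y w : Vec n) (h : w ≠ y) : dlt y w = 0 := by rw [dlt_apply]; simp [h]

lemma dlt_eq_sum (y : Vec n) : dlt y = ∑ T ∈ (univ : Finset (Fin n)).powerset,
      (∏ i ∈ univ \ T, (1 + y i)) • chi T := by
  funext w
  have h := Finset.prod_add (fun i => w i) (fun i => 1 + y i) (univ : Finset (Fin n))
  have : dlt y w = ∏ i ∈ univ, (w i + (1 + y i)) := by
    unfold dlt; congr 1; funext i; ring
  rw [this, h, Finset.sum_apply]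
  refine Finset.sum_congr rfl fun T _ => ?_
  simp only [Pi.smul_apply, smul_eq_mul, chi]
  ring

lemma dlt_mem_span (y : Vec n) : dlt y ∈ Submodule.span (ZMod 2) (Set.range (chi (n := n))) := by
  rw [dlt_eq_sum]
  exact Submodule.sum_mem _ fun T _ =>
    Submodule.smul_mem _ _ (Submodule.subset_span ⟨T, rfl⟩)

lemma eq_sum_dlt (f : Fn n) : f = ∑ y, f y • dlt y := by
  funext w
  rw [Finset.sum_apply]
  rw [Finset.sum_eq_single w (fun y _ hy => by
    simp [dlt_ne y w (Ne.symm hy)]) (by simp)]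
  simp [dlt_self]

lemma chi_span_top : ⊤ ≤ Submodule.span (ZMod 2) (Set.range (chi (n := n))) := by
  intro f _
  rw [eq_sum_dlt f]
  exact Submodule.sum_mem _ fun y _ => Submodule.smul_mem _ _ (dlt_mem_span y)

lemma finrank_Fn : Module.finrank (ZMod 2) (Fn n) = 2 ^ n := by
  rw [Module.finrank_pi (ZMod 2)]
  simp [Fintype.card_fun]

lemma chi_linearIndependent : LinearIndependent (ZMod 2) (chi (n := n)) := by
  apply linearIndependent_of_top_le_span_of_card_eq_finrank chi_span_top
  rw [finrank_Fn]
  simp [Fintype.card_finset]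


def Vd (n d : ℕ) : Submodule (ZMod 2) (Fn n) :=
  Submodule.span (ZMod 2) (Set.range (fun T : {T : Finset (Fin n) // T.card ≤ d} => chi T.1))

def mcount (n t : ℕ) : ℕ := ∑ j ∈ range (t + 1), n.choose j

lemma card_filter_card_eq (j : ℕ) :
    ((univ : Finset (Finset (Fin n))).filter (fun T => T.card = j)).card = n.choose j := by
  rw [← Finset.powerset_univ, ← Finset.powersetCard_eq_filter, Finset.card_powersetCard,
    Finset.card_fin]

lemma card_filter_card_le (t : ℕ) :
    ((univ : Finset (Finset (Fin n))).filter (fun T => T.card ≤ t)).card = mcount n t := by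
  rw [Finset.card_eq_sum_card_fiberwise (f := fun T => T.card) (t := range (t + 1))
    (fun T hT => by simp only [Finset.mem_coe, mem_filter] at hT; exact mem_range.2 (Nat.lt_succ_of_le hT.2))]
  refine Finset.sum_congr rfl fun j hj => ?_
  rw [Finset.filter_filter]
  have : Finset.filter (fun T : Finset (Fin n) => T.card ≤ t ∧ T.card = j) univ
      = Finset.filter (fun T => T.card = j) univ :=
    Finset.filter_congr (fun T _ => ⟨fun h => h.2,
      fun h => ⟨h ▸ Nat.lt_succ_iff.1 (mem_range.1 hj), h⟩⟩)
  rw [this]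
  exact card_filter_card_eq j

lemma card_filter_card_gt (d : ℕ) :
    ((univ : Finset (Finset (Fin n))).filter (fun T => d < T.card)).card
      = 2 ^ n - mcount n d := by
  have h := Finset.card_filter_add_card_filter_not
    (s := (univ : Finset (Finset (Fin n)))) (p := fun T => T.card ≤ d)
  simp only [not_le] at h
  rw [card_filter_card_le] at h
  have huniv : (univ : Finset (Finset (Fin n))).card = 2 ^ n := by
    simp [Fintype.card_finset]
  omega

lemma sub_mcount (d : ℕ) (hd : d < n) :
    2 ^ n - mcount n d = ∑ j ∈ range (n - d), n.choose j := by
  have h1 : mcount n d + ∑ j ∈ range (n - d), n.choose (d + 1 + j) = 2 ^ n := by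
    have h := Finset.sum_range_add (fun j => n.choose j) (d + 1) (n - d)
    have he : d + 1 + (n - d) = n + 1 := by omega
    rw [he, Nat.sum_range_choose] at h
    rw [mcount]
    omega
  have h2 : ∑ j ∈ range (n - d), n.choose (d + 1 + j)
      = ∑ j ∈ range (n - d), n.choose j := by
    rw [← Finset.sum_range_reflect (fun j => n.choose j) (n - d)]
    refine Finset.sum_congr rfl fun j hj => ?_
    have hj' := mem_range.1 hj
    rw [← Nat.choose_symm (by omega : d + 1 + j ≤ n)]
    congr 1; omega
  omega

lemma chi_shift_mem (x : Vec n) (d : ℕ) (T : Finset (Fin n)) (hT : T.card ≤ d) :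
    (fun w => chi T (x + w)) ∈ Vd n d := by
  have : (fun w => chi T (x + w))
      = ∑ t ∈ T.powerset, (∏ i ∈ T \ t, x i) • chi t := by
    funext w
    rw [Finset.sum_apply]
    have : chi T (x + w) = ∏ i ∈ T, (w i + x i) := by
      unfold chi; refine Finset.prod_congr rfl fun i _ => ?_; simp [add_comm]
    rw [this, Finset.prod_add]
    refine Finset.sum_congr rfl fun t _ => ?_
    simp only [Pi.smul_apply, smul_eq_mul, chi]; ring
  rw [this]
  refine Submodule.sum_mem _ fun t ht => Submodule.smul_mem _ _ (Submodule.subset_span ?_)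
  exact ⟨⟨t, le_trans (Finset.card_le_card (Finset.mem_powerset.1 ht)) hT⟩, rfl⟩

lemma shift_mem_Vd {d : ℕ} {h : Fn n} (hh : h ∈ Vd n d) (x : Vec n) :
    (fun w => h (x + w)) ∈ Vd n d := by
  let L : Fn n →ₗ[ZMod 2] Fn n := LinearMap.funLeft (ZMod 2) (ZMod 2) (fun w => x + w)
  have : (fun w => h (x + w)) = L h := rfl
  rw [this]
  have : Submodule.map L (Vd n d) ≤ Vd n d := by
    rw [Vd, Submodule.map_span, Submodule.span_le]
    rintro f ⟨g, ⟨T, rfl⟩, rfl⟩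
    exact chi_shift_mem x d T.1 T.2
  exact this ⟨h, hh, rfl⟩

lemma mem_Vd_rep {d : ℕ} {p : Fn n} (hp : p ∈ Vd n d) :
    ∃ c : {T : Finset (Fin n) // T.card ≤ d} → ZMod 2,
      p = ∑ T, c T • chi T.1 := by
  obtain ⟨c, hc⟩ := (Submodule.mem_span_range_iff_exists_fun (ZMod 2)).1 hp
  exact ⟨c, hc.symm⟩


section chunk3
variable {n : ℕ}
open Finset

lemma finrank_Vd (d : ℕ) : Module.finrank (ZMod 2) (Vd n d) = mcount n d := by
  have hli : LinearIndependent (ZMod 2)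
      (fun T : {T : Finset (Fin n) // T.card ≤ d} => chi T.1) :=
    chi_linearIndependent.comp Subtype.val Subtype.val_injective
  rw [Vd, finrank_span_eq_card hli]
  rw [Fintype.card_subtype, card_filter_card_le]

lemma count_bad (S : Finset (Vec n)) (d : ℕ) :
    ((S.filter (fun x => ∀ h ∈ Vd n d, (∀ y, y ∉ S → h y = 0) → h x = 0)).card)
      ≤ 2 ^ n - mcount n d := by
  classical
  set Bad := S.filter (fun x => ∀ h ∈ Vd n d, (∀ y, y ∉ S → h y = 0) → h x = 0) with hBad
  have hli : LinearIndependent (ZMod 2)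
      (fun x : ↥Bad => Submodule.Quotient.mk (p := Vd n d) (dlt x.1)) := by
    rw [Fintype.linearIndependent_iff]
    intro g hg x₀
    set h : Fn n := ∑ x : ↥Bad, g x • dlt x.1 with hh
    have hmem : h ∈ Vd n d := by
      have hq : Submodule.mkQ (Vd n d) h = 0 := by
        rw [hh, map_sum]
        simp only [map_smul, Submodule.mkQ_apply]
        exact hg
      rwa [Submodule.mkQ_apply, Submodule.Quotient.mk_eq_zero] at hq
    have hvan : ∀ y, y ∉ S → h y = 0 := by
      intro y hy
      rw [hh]
      rw [Finset.sum_apply]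
      refine Finset.sum_eq_zero fun x _ => ?_
      have hx : x.1 ∈ S := (Finset.mem_filter.1 x.2).1
      have : y ≠ x.1 := fun he => hy (he ▸ hx)
      simp [dlt_ne _ _ this]
    have hx₀ : h x₀.1 = 0 := (Finset.mem_filter.1 x₀.2).2 h hmem hvan
    rw [hh] at hx₀
    rw [Finset.sum_apply] at hx₀
    rw [Finset.sum_eq_single x₀ (fun x _ hx => by
        have : x₀.1 ≠ x.1 := fun he => hx (Subtype.ext he.symm)
        simp [dlt_ne _ _ this]) (by simp)] at hx₀
    simpa [dlt_self] using hx₀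
  have hcard := hli.fintype_card_le_finrank
  rw [Fintype.card_coe] at hcard
  have hq : Module.finrank (ZMod 2) (Fn n ⧸ Vd n d) = 2 ^ n - mcount n d := by
    have := Submodule.finrank_quotient_add_finrank (Vd n d)
    rw [finrank_Vd, finrank_Fn] at this
    omega
  omega
end chunk3


section chunk4
variable {n : ℕ}
open Finset

lemma vec_add_self (v : Vec n) : v + v = 0 := by
  funext i; exact CharTwo.add_self_eq_zero _

lemma chi_add (T : Finset (Fin n)) (u v : Vec n) :
    chi T (u + v) = ∑ T₁ ∈ T.powerset, chi T₁ u * chi (T \ T₁) v := by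
  have : chi T (u + v) = ∏ i ∈ T, (u i + v i) := rfl
  rw [this, Finset.prod_add]
  rfl

lemma rank_lemma (d t s : ℕ) (hd : d ≤ t + s + 1) (p : Fn n) (hp : p ∈ Vd n d)
    (B : Finset (Vec n)) (h0 : p 0 = 1)
    (hoff : ∀ u ∈ B, ∀ v ∈ B, u ≠ v → p (u + v) = 0) :
    B.card ≤ mcount n t + mcount n s := by
  classical
  obtain ⟨c, hc⟩ := mem_Vd_rep hp
  set Pt : Finset (Finset (Fin n)) := univ.filter (fun T => T.card ≤ t) with hPt
  set Ps : Finset (Finset (Fin n)) := univ.filter (fun T => T.card ≤ s) with hPs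
  set gA : Finset (Fin n) → Fn n := fun T₁ => fun v =>
    ∑ T : {T : Finset (Fin n) // T.card ≤ d}, (if T₁ ⊆ T.1 then c T * chi (T.1 \ T₁) v else 0) with hgA
  set ccoef : Vec n → Finset (Fin n) → ZMod 2 := fun u T₂ =>
    ∑ T : {T : Finset (Fin n) // T.card ≤ d}, (if T₂ ⊆ T.1 ∧ t < (T.1 \ T₂).card then c T * chi (T.1 \ T₂) u else 0) with hcc
  have key : ∀ u v : Vec n, p (u + v)
      = (∑ T₁ ∈ Pt, chi T₁ u * gA T₁ v) + (∑ T₂ ∈ Ps, ccoef u T₂ * chi T₂ v) := by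
    intro u v
    have h1 : p (u + v) = ∑ T : {T : Finset (Fin n) // T.card ≤ d}, ∑ T₁ ∈ T.1.powerset,
        c T * (chi T₁ u * chi (T.1 \ T₁) v) := by
      rw [hc, Finset.sum_apply]
      refine Finset.sum_congr rfl fun T _ => ?_
      rw [Pi.smul_apply, smul_eq_mul, chi_add, Finset.mul_sum]
    rw [h1]
    have hsplit : ∀ T : {T : Finset (Fin n) // T.card ≤ d}, ∑ T₁ ∈ T.1.powerset, c T * (chi T₁ u * chi (T.1 \ T₁) v)
        = (∑ T₁ ∈ T.1.powerset.filter (fun A => A.card ≤ t),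
            c T * (chi T₁ u * chi (T.1 \ T₁) v))
          + ∑ T₁ ∈ T.1.powerset.filter (fun A => ¬ A.card ≤ t),
            c T * (chi T₁ u * chi (T.1 \ T₁) v) :=
      fun T => (Finset.sum_filter_add_sum_filter_not _ _ _).symm
    rw [Finset.sum_congr rfl (fun T _ => hsplit T), Finset.sum_add_distrib]
    congr 1
    · -- part A
      have hA : ∀ T : {T : Finset (Fin n) // T.card ≤ d}, ∑ T₁ ∈ T.1.powerset.filter (fun A => A.card ≤ t),
          c T * (chi T₁ u * chi (T.1 \ T₁) v)
          = ∑ T₁ ∈ Pt, (if T₁ ⊆ T.1 then c T * (chi T₁ u * chi (T.1 \ T₁) v) else 0) := by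
        intro T
        rw [← Finset.sum_filter]
        apply Finset.sum_congr _ (fun _ _ => rfl)
        ext A
        simp only [Finset.mem_filter, Finset.mem_powerset, Finset.mem_univ, true_and, hPt]
        tauto
      rw [Finset.sum_congr rfl (fun T _ => hA T), Finset.sum_comm]
      refine Finset.sum_congr rfl fun T₁ _ => ?_
      rw [hgA, Finset.mul_sum]
      refine Finset.sum_congr rfl fun T _ => ?_
      split_ifs with h
      · ring
      · ring
    · -- part B
      have hB : ∀ T : {T : Finset (Fin n) // T.card ≤ d},
          ∑ T₁ ∈ T.1.powerset.filter (fun A => ¬ A.card ≤ t),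
          c T * (chi T₁ u * chi (T.1 \ T₁) v)
          = ∑ T₂ ∈ Ps, (if T₂ ⊆ T.1 ∧ t < (T.1 \ T₂).card
              then c T * (chi (T.1 \ T₂) u * chi T₂ v) else 0) := by
        intro T
        have step1 : ∑ T₁ ∈ T.1.powerset.filter (fun A => ¬ A.card ≤ t),
            c T * (chi T₁ u * chi (T.1 \ T₁) v)
            = ∑ T₂ ∈ T.1.powerset.filter (fun A => t < (T.1 \ A).card),
              c T * (chi (T.1 \ T₂) u * chi T₂ v) := by
          refine Finset.sum_nbij' (fun T₁ => T.1 \ T₁) (fun T₂ => T.1 \ T₂) ?_ ?_ ?_ ?_ ?_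
          · intro A hA
            simp only [Finset.mem_filter, Finset.mem_powerset, not_le] at hA ⊢
            rw [Finset.sdiff_sdiff_self_left, Finset.inter_eq_right.2 hA.1]
            exact ⟨Finset.sdiff_subset, hA.2⟩
          · intro A hA
            simp only [Finset.mem_filter, Finset.mem_powerset, not_le] at hA ⊢
            exact ⟨Finset.sdiff_subset, hA.2⟩
          · intro A hA
            simp only [Finset.mem_filter, Finset.mem_powerset] at hA
            exact Finset.sdiff_sdiff_eq_self hA.1
          · intro A hA
            simp only [Finset.mem_filter, Finset.mem_powerset] at hA
            exact Finset.sdiff_sdiff_eq_self hA.1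
          · intro A hA
            simp only [Finset.mem_filter, Finset.mem_powerset] at hA
            rw [
              Finset.sdiff_sdiff_eq_self hA.1]
        have step2 : ∑ T₂ ∈ T.1.powerset.filter (fun A => t < (T.1 \ A).card),
              c T * (chi (T.1 \ T₂) u * chi T₂ v)
            = ∑ T₂ ∈ Ps, (if T₂ ⊆ T.1 ∧ t < (T.1 \ T₂).card
              then c T * (chi (T.1 \ T₂) u * chi T₂ v) else 0) := by
          conv_rhs => rw [← Finset.sum_filter]
          apply Finset.sum_congr _ (fun _ _ => rfl)
          ext A
          simp only [Finset.mem_filter, Finset.mem_powerset, Finset.mem_univ, true_and, hPs]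
          constructor
          · rintro ⟨h1, h2⟩
            refine ⟨?_, h1, h2⟩
            have hTA : (T.1 \ A).card = T.1.card - A.card := Finset.card_sdiff_of_subset h1
            have := T.2
            have hAc := Finset.card_le_card h1
            omega
          · rintro ⟨_, h1, h2⟩; exact ⟨h1, h2⟩
        rw [step1, step2]
      rw [Finset.sum_congr rfl (fun T _ => hB T), Finset.sum_comm]
      refine Finset.sum_congr rfl fun T₂ _ => ?_
      rw [hcc, Finset.sum_mul]
      refine Finset.sum_congr rfl fun T _ => ?_
      split_ifs with h
      · ring
      · ring
  -- the span W
  set W : Submodule (ZMod 2) (Fn n) :=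
    Submodule.span (ZMod 2) ((Pt.image gA ∪ Ps.image chi : Finset (Fn n)) : Set (Fn n)) with hW
  have hrow_mem : ∀ u : Vec n, (fun v => p (u + v)) ∈ W := by
    intro u
    have : (fun v => p (u + v))
        = (∑ T₁ ∈ Pt, chi T₁ u • gA T₁) + ∑ T₂ ∈ Ps, ccoef u T₂ • chi T₂ := by
      funext v
      rw [key u v]
      simp only [Pi.add_apply, Finset.sum_apply, Pi.smul_apply, smul_eq_mul]
    rw [this]
    refine Submodule.add_mem _ (Submodule.sum_mem _ fun T₁ h₁ => Submodule.smul_mem _ _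
      (Submodule.subset_span ?_)) (Submodule.sum_mem _ fun T₂ h₂ => Submodule.smul_mem _ _
      (Submodule.subset_span ?_))
    · exact Finset.mem_coe.2 (Finset.mem_union_left _ (Finset.mem_image_of_mem _ h₁))
    · exact Finset.mem_coe.2 (Finset.mem_union_right _ (Finset.mem_image_of_mem _ h₂))
  -- linear independence of rows
  have hli : LinearIndependent (ZMod 2) (fun u : ↥B => (fun v => p (u.1 + v) : Fn n)) := by
    apply LinearIndependent.of_comp
      (LinearMap.funLeft (ZMod 2) (ZMod 2) (Subtype.val : ↥B → Vec n))
    rw [Fintype.linearIndependent_iff]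
    intro g hg u₀
    have := congrFun hg u₀
    simp only [Finset.sum_apply, Pi.smul_apply, LinearMap.funLeft_apply,
      Function.comp_apply, smul_eq_mul, Pi.zero_apply] at this
    rw [Finset.sum_eq_single u₀ (fun u _ hu => by
        rw [hoff u.1 u.2 u₀.1 u₀.2 (fun he => hu (Subtype.ext he))]
        ring) (by simp)] at this
    rw [vec_add_self, h0, mul_one] at this
    exact this
  -- conclude
  have hli' : LinearIndependent (ZMod 2)
      (fun u : ↥B => (⟨(fun v => p (u.1 + v)), hrow_mem u.1⟩ : ↥W)) := by
    apply LinearIndependent.of_comp W.subtype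
    exact hli
  have hcard := hli'.fintype_card_le_finrank
  rw [Fintype.card_coe] at hcard
  refine hcard.trans ?_
  refine (finrank_span_finset_le_card _).trans ?_
  refine (Finset.card_union_le _ _).trans ?_
  have h1 : (Pt.image gA).card ≤ mcount n t :=
    (Finset.card_image_le).trans (le_of_eq (card_filter_card_le t))
  have h2 : (Ps.image chi).card ≤ mcount n s :=
    (Finset.card_image_le).trans (le_of_eq (card_filter_card_le s))
  omega
end chunk4


section chunk5
variable {n : ℕ}
open Finset

def enc (x u : ZMod 2) : ZMod 4 := (x.val : ZMod 4) + 2 * (u.val : ZMod 4)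
def pi1 (a : ZMod 4) : ZMod 2 := (a.val : ZMod 2)
def pi2 (a : ZMod 4) : ZMod 2 := ((a.val / 2 : ℕ) : ZMod 2)

lemma enc_pi (a : ZMod 4) : enc (pi1 a) (pi2 a) = a := by revert a; decide
lemma enc_add_enc (x u v : ZMod 2) : enc x u + enc x v = enc 0 (x + u + v) := by
  revert x u v; decide
lemma enc0_inj (y y' : ZMod 2) (h : enc 0 y = enc 0 y') : y = y' := by revert y y' h; decide
lemma zmod2_ne_one (a : ZMod 2) (h : a ≠ 1) : a = 0 := by revert a h; decide

def Pm (a : Fin n → ZMod 4) : Vec n := fun i => pi1 (a i)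
def Sm (a : Fin n → ZMod 4) : Vec n := fun i => pi2 (a i)
def Ev (x u : Vec n) : Fin n → ZMod 4 := fun i => enc (x i) (u i)

lemma Ev_Pm_Sm (a : Fin n → ZMod 4) : Ev (Pm a) (Sm a) = a := by
  funext i; exact enc_pi (a i)

lemma dlt_mem_Vd_top (x : Vec n) : dlt x ∈ Vd n n := by
  rw [dlt_eq_sum]
  refine Submodule.sum_mem _ fun T _ => Submodule.smul_mem _ _ (Submodule.subset_span ?_)
  refine ⟨⟨T, ?_⟩, rfl⟩
  have := Finset.card_le_univ T
  simpa using this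

def m2 (n d : ℕ) : ℕ := mcount n ((d-1)/2) + mcount n ((d-1) - (d-1)/2)

lemma mcount_succ (k : ℕ) : mcount n (k+1) = mcount n k + n.choose (k+1) := by
  rw [mcount, mcount, Finset.sum_range_succ]

lemma m2_succ_le (d : ℕ) : m2 n (d+1) ≤ m2 n d + n.choose ((d+1)/2) := by
  obtain ⟨k, rfl | rfl⟩ := Nat.even_or_odd' d
  · rcases Nat.eq_zero_or_pos k with rfl | hk
    · simp [m2]
    · have h1 : (2*k+1-1)/2 = k := by omega
      have h2 : (2*k+1-1) - k = k := by omega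
      have h3 : (2*k-1)/2 = k - 1 := by omega
      have h4 : (2*k-1) - (k-1) = k := by omega
      have h5 : (2*k+1)/2 = k := by omega
      rw [m2, m2, h1, h2, h3, h4, h5]
      have h6 : k = (k-1) + 1 := by omega
      have := mcount_succ (n := n) (k - 1)
      rw [← h6] at this
      omega
  · have h1 : (2*k+1+1-1)/2 = k := by omega
    have h2 : (2*k+1+1-1) - k = k+1 := by omega
    have h3 : (2*k+1-1)/2 = k := by omega
    have h4 : (2*k+1-1) - k = k := by omega
    have h5 : (2*k+1+1)/2 = k+1 := by omega
    rw [m2, m2, h1, h2, h3, h4, h5]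
    have := mcount_succ (n := n) k
    omega

lemma m2_le (d : ℕ) : m2 n d ≤ 2 + ∑ e ∈ range d, n.choose ((e+1)/2) := by
  induction d with
  | zero => simp [m2, mcount]
  | succ d ih =>
    rw [Finset.sum_range_succ]
    have := m2_succ_le (n := n) d
    omega

theorem key_nat (A : Finset (Fin n → ZMod 4)) (hA : ProgressionFree (A : Set (Fin n → ZMod 4))) :
    A.card ≤ 2 * 2^n + ∑ e ∈ range n, n.choose ((e+1)/2) * min (2^n) (2^n - mcount n e) := by
  classical
  set S : Finset (Vec n) := A.image Pm with hS
  set Bx : Vec n → Finset (Vec n) := fun x => (A.filter (fun a => Pm a = x)).image Sm with hBx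
  -- fiber cards
  have hfib : ∀ x, (A.filter (fun a => Pm a = x)).card = (Bx x).card := by
    intro x
    rw [hBx]
    rw [Finset.card_image_of_injOn]
    intro a ha b hb hab
    simp only [Finset.mem_coe, Finset.mem_filter] at ha hb
    rw [← Ev_Pm_Sm a, ← Ev_Pm_Sm b, ha.2, hb.2, hab]
  have hcardA : A.card = ∑ x ∈ S, (Bx x).card := by
    rw [Finset.card_eq_sum_card_fiberwise (f := Pm) (t := S)
      (fun a ha => Finset.mem_image_of_mem _ ha)]
    exact Finset.sum_congr rfl fun x _ => hfib x
  -- elements of Bx come from A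
  have hmemA : ∀ x ∈ S, ∀ u ∈ Bx x, Ev x u ∈ A ∧ Pm (Ev x u) = x ∧ Sm (Ev x u) = u := by
    intro x hx u hu
    rw [hBx] at hu
    obtain ⟨a, ha, rfl⟩ := Finset.mem_image.1 hu
    rw [Finset.mem_filter] at ha
    rw [← ha.2, Ev_Pm_Sm]
    exact ⟨ha.1, rfl, rfl⟩
  -- PF transfer
  have hpf : ∀ x ∈ S, ∀ u ∈ Bx x, ∀ v ∈ Bx x, u ≠ v → x + u + v ∉ S := by
    intro x hx u hu v hv huv hmem
    obtain ⟨c, hc, hcP⟩ := Finset.mem_image.1 hmem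
    obtain ⟨haA, haP, haS⟩ := hmemA x hx u hu
    obtain ⟨hbA, hbP, hbS⟩ := hmemA x hx v hv
    set a := Ev x u
    set b := Ev x v
    have hdouble : ∀ (X s : ZMod 2), enc X s + enc X s = enc 0 X := by decide
    have hab : a + b = c + c := by
      funext i
      have hc' : c i = enc ((x + u + v) i) (Sm c i) := by
        rw [← hcP]; exact (congrFun (Ev_Pm_Sm c) i).symm
      have h1 : (a + b) i = enc 0 (x i + u i + v i) := by
        simp only [Pi.add_apply]
        exact enc_add_enc (x i) (u i) (v i)
      have h2 : (c + c) i = enc 0 (x i + u i + v i) := by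
        simp only [Pi.add_apply]
        rw [hc', hdouble]
        rfl
      rw [h1, h2]
    have hanb : a ≠ b := by
      intro h
      apply huv
      rw [← haS, ← hbS, h]
    have hanc : a ≠ c := by
      intro h
      apply hanb
      have : a + b = a + a := by rw [hab, h]
      exact (add_left_cancel this).symm
    have hbnc : b ≠ c := by
      intro h
      apply hanb
      have : a + b = b + b := by rw [hab, h]
      exact add_right_cancel this
    exact hA ⟨a, Finset.mem_coe.2 haA, b, Finset.mem_coe.2 hbA, c, Finset.mem_coe.2 hc,
      hanb, hanc, hbnc, hab⟩
  -- minimal degree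
  have hexP : ∀ x ∈ S, ∃ d : ℕ, ∃ h, h ∈ Vd n d ∧ (∀ y, y ∉ S → h y = 0) ∧ h x = 1 := by
    intro x hx
    exact ⟨n, ⟨dlt x, dlt_mem_Vd_top x,
      fun y hy => dlt_ne x y (fun he => hy (he ▸ hx)), dlt_self x⟩⟩
  set dxf : Vec n → ℕ := fun x =>
    if hx : ∃ d : ℕ, ∃ h, h ∈ Vd n d ∧ (∀ y, y ∉ S → h y = 0) ∧ h x = 1
    then Nat.find hx else 0 with hdxf
  have hdx_le : ∀ x ∈ S, dxf x ≤ n := by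
    intro x hx
    rw [hdxf]
    simp only [dif_pos (hexP x hx)]
    exact Nat.find_le ⟨dlt x, dlt_mem_Vd_top x,
      fun y hy => dlt_ne x y (fun he => hy (he ▸ hx)), dlt_self x⟩
  have hBx_le : ∀ x ∈ S, (Bx x).card ≤ m2 n (dxf x) := by
    intro x hx
    have hfind := Nat.find_spec (hexP x hx)
    obtain ⟨h, hmem, hvan, hx1⟩ := hfind
    have hd : dxf x = Nat.find (hexP x hx) := by rw [hdxf]; simp only [dif_pos (hexP x hx)]
    rw [hd]
    set d := Nat.find (hexP x hx) with hdd
    refine rank_lemma d ((d-1)/2) ((d-1) - (d-1)/2) (by omega) (fun w => h (x + w))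
      (shift_mem_Vd hmem x) (Bx x) (by show h (x + 0) = 1; rw [add_zero]; exact hx1) ?_
    intro u hu v hv huv
    have hout : x + u + v ∉ S := hpf x hx u hu v hv huv
    show h (x + (u + v)) = 0
    have hassoc : x + (u + v) = x + u + v := (add_assoc x u v).symm
    rw [hassoc]
    exact hvan _ hout
  have hBx_le2 : ∀ x ∈ S, (Bx x).card
      ≤ 2 + ∑ e ∈ range n, if e < dxf x then n.choose ((e+1)/2) else 0 := by
    intro x hx
    refine (hBx_le x hx).trans ((m2_le (dxf x)).trans ?_)
    have heq : ∑ e ∈ range (dxf x), n.choose ((e+1)/2)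
        = ∑ e ∈ range n, if e < dxf x then n.choose ((e+1)/2) else 0 := by
      rw [← Finset.sum_filter]
      apply Finset.sum_congr _ (fun _ _ => rfl)
      ext e
      simp only [Finset.mem_filter, Finset.mem_range]
      have := hdx_le x hx
      omega
    omega
  -- count of large-degree x
  have hcount : ∀ e, (S.filter (fun x => e < dxf x)).card ≤ min (2^n) (2^n - mcount n e) := by
    intro e
    refine le_min ?_ ?_
    · have hh1 : (S.filter (fun x => e < dxf x)).card ≤ S.card :=
        Finset.card_le_card (Finset.filter_subset _ _)
      have hh2 : S.card ≤ 2^n := by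
        have h := Finset.card_le_univ S
        simpa [Fintype.card_fun] using h
      omega
    · refine le_trans (Finset.card_le_card ?_) (count_bad S e)
      intro x hxm
      rw [Finset.mem_filter] at hxm ⊢
      obtain ⟨hxS, hxd⟩ := hxm
      refine ⟨hxS, ?_⟩
      intro h hmem hvan
      have hd : dxf x = Nat.find (hexP x hxS) := by rw [hdxf]; simp only [dif_pos (hexP x hxS)]
      rw [hd] at hxd
      have hnot := Nat.find_min (hexP x hxS) hxd
      apply zmod2_ne_one
      intro hone
      exact hnot ⟨h, hmem, hvan, hone⟩
  -- assemble
  have hSle : S.card ≤ 2^n := by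
    have h := Finset.card_le_univ S
    simpa [Fintype.card_fun] using h
  calc A.card = ∑ x ∈ S, (Bx x).card := hcardA
    _ ≤ ∑ x ∈ S, (2 + ∑ e ∈ range n, if e < dxf x then n.choose ((e+1)/2) else 0) :=
        Finset.sum_le_sum hBx_le2
    _ = 2 * S.card + ∑ x ∈ S, ∑ e ∈ range n, (if e < dxf x then n.choose ((e+1)/2) else 0) := by
        rw [Finset.sum_add_distrib, Finset.sum_const, smul_eq_mul, mul_comm]
    _ = 2 * S.card + ∑ e ∈ range n, ∑ x ∈ S, (if e < dxf x then n.choose ((e+1)/2) else 0) := by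
        rw [Finset.sum_comm]
    _ = 2 * S.card + ∑ e ∈ range n,
          n.choose ((e+1)/2) * (S.filter (fun x => e < dxf x)).card := by
        congr 1
        refine Finset.sum_congr rfl fun e _ => ?_
        rw [← Finset.sum_filter, Finset.sum_const, smul_eq_mul, mul_comm]
    _ ≤ 2 * 2^n + ∑ e ∈ range n, n.choose ((e+1)/2) * min (2^n) (2^n - mcount n e) := by
        refine Nat.add_le_add (Nat.mul_le_mul_left 2 hSle) (Finset.sum_le_sum fun e _ =>
          Nat.mul_le_mul_left _ (hcount e))

end chunk5



lemma binEnt_mul_log2 (q : ℝ) :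
    binEnt q * Real.log 2 = -(q * Real.log q + (1 - q) * Real.log (1 - q)) := by
  have h2 : Real.log 2 ≠ 0 := by
    have := Real.log_pos (by norm_num : (1:ℝ) < 2); linarith
  unfold binEnt Real.logb
  field_simp
  ring

lemma binEnt_eq_binEntropy_div (x : ℝ) : binEnt x = Real.binEntropy x / Real.log 2 := by
  unfold binEnt Real.binEntropy Real.logb
  rw [Real.log_inv, Real.log_inv]
  field_simp
  ring

lemma binEnt_le_one (x : ℝ) : binEnt x ≤ 1 := by
  rw [binEnt_eq_binEntropy_div]
  rw [div_le_one (Real.log_pos (by norm_num))]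
  exact Real.binEntropy_le_log_two

lemma gam_bddAbove : BddAbove ((fun ε : ℝ => (1 / 2) * (binEnt (1 / 2 - ε) + binEnt (2 * ε))) ''
    Set.Ioo 0 (1 / 4)) := by
  refine ⟨1, ?_⟩
  rintro y ⟨ε, _, rfl⟩
  have h1 := binEnt_le_one (1/2 - ε)
  have h2 := binEnt_le_one (2*ε)
  simp only
  linarith

lemma logb23_ge : (52:ℝ)/33 ≤ Real.logb 2 3 := by
  have h1 : ((2:ℝ) ^ ((52:ℝ)/33)) ^ (33:ℕ) = (2:ℝ)^(52:ℕ) := by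
    rw [← Real.rpow_natCast ((2:ℝ) ^ ((52:ℝ)/33)) 33, ← Real.rpow_mul (by norm_num)]
    norm_num
  have h2 : (2:ℝ) ^ ((52:ℝ)/33) ≤ 3 := by
    have h3 : ((2:ℝ) ^ ((52:ℝ)/33)) ^ (33:ℕ) ≤ (3:ℝ)^(33:ℕ) := by
      rw [h1]; norm_num
    exact le_of_pow_le_pow_left₀ (by norm_num) (by norm_num) h3
  have h4 : Real.logb 2 ((2:ℝ) ^ ((52:ℝ)/33)) ≤ Real.logb 2 3 :=
    Real.logb_le_logb_of_le (by norm_num) (by positivity) h2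
  rwa [Real.logb_rpow (by norm_num) (by norm_num)] at h4

lemma binEnt_third : binEnt (1/3 : ℝ) = Real.logb 2 3 - 2/3 := by
  unfold binEnt
  have h1 : Real.logb 2 ((1:ℝ)/3) = - Real.logb 2 3 := by
    rw [show (1:ℝ)/3 = (3:ℝ)⁻¹ by norm_num, Real.logb_inv]
  have h2 : (1:ℝ) - 1/3 = 2/3 := by norm_num
  have h3 : Real.logb 2 ((2:ℝ)/3) = 1 - Real.logb 2 3 := by
    rw [Real.logb_div (by norm_num) (by norm_num), Real.logb_self_eq_one] <;> norm_num
  rw [h2, h1, h3]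
  ring

lemma gam_ge : Real.logb 2 3 - 2/3 ≤ gam := by
  have hmem : (fun ε : ℝ => (1 / 2) * (binEnt (1 / 2 - ε) + binEnt (2 * ε))) (1/6)
      ∈ ((fun ε : ℝ => (1 / 2) * (binEnt (1 / 2 - ε) + binEnt (2 * ε))) ''
        Set.Ioo 0 (1 / 4)) := Set.mem_image_of_mem _ (by constructor <;> norm_num)
  have hle := le_csSup gam_bddAbove hmem
  have heq : (fun ε : ℝ => (1 / 2) * (binEnt (1 / 2 - ε) + binEnt (2 * ε))) (1/6)
      = binEnt (1/3) := by
    norm_num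
    ring
  rw [heq, binEnt_third] at hle
  exact hle

lemma gam_ge_num : (10:ℝ)/11 ≤ gam := by
  have := gam_ge
  have := logb23_ge
  linarith

lemma f_le_gam (ε : ℝ) (h1 : 0 < ε) (h2 : ε < 1/4) :
    (1 / 2) * (binEnt (1 / 2 - ε) + binEnt (2 * ε)) ≤ gam :=
  le_csSup gam_bddAbove (Set.mem_image_of_mem _ ⟨h1, h2⟩)

lemma tail_bound (n m : ℕ) (q : ℝ) (h0 : 0 < q) (h2 : q ≤ 1/2) (hm : (m:ℝ) ≤ q * n) :
    ((∑ j ∈ Finset.range (m+1), n.choose j : ℕ) : ℝ) ≤ (2:ℝ) ^ ((n:ℝ) * binEnt q) := by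
  have hq1 : q < 1 := lt_of_le_of_lt h2 (by norm_num)
  have h1q : 0 < 1 - q := by linarith
  have hqle : q ≤ 1 - q := by linarith
  have hmn : m ≤ n := by
    by_contra hc
    push_neg at hc
    have hcr : (n:ℝ) < m := by exact_mod_cast hc
    nlinarith [Nat.cast_nonneg (α := ℝ) n]
  set Q : ℝ := q^m * (1-q)^(n-m) with hQ
  have hQpos : 0 < Q := mul_pos (pow_pos h0 m) (pow_pos h1q _)
  have hsum1 : ∑ j ∈ Finset.range (n+1), q^j * (1-q)^(n-j) * (n.choose j : ℝ) = 1 := by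
    have h := add_pow q (1-q) n
    rw [show q + (1-q) = 1 by ring, one_pow] at h
    rw [← h]
  have hterm : ∀ j, j ≤ m → Q ≤ q^j * (1-q)^(n-j) := by
    intro j hj
    have e1 : q^m = q^j * q^(m-j) := by rw [← pow_add]; congr 1; omega
    have e2 : (1-q)^(n-j) = (1-q)^(n-m) * (1-q)^(m-j) := by rw [← pow_add]; congr 1; omega
    rw [hQ, e1, e2]
    have e3 : q^(m-j) ≤ (1-q)^(m-j) := pow_le_pow_left₀ h0.le hqle _
    calc q ^ j * q ^ (m - j) * (1 - q) ^ (n - m)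
        ≤ q ^ j * (1-q) ^ (m - j) * (1 - q) ^ (n - m) :=
          mul_le_mul_of_nonneg_right
            (mul_le_mul_of_nonneg_left e3 (pow_nonneg h0.le j))
            (pow_nonneg h1q.le (n - m))
      _ = q ^ j * ((1 - q) ^ (n - m) * (1 - q) ^ (m - j)) := by ring
  have hstepA : (∑ j ∈ Finset.range (m+1), (n.choose j:ℝ)) * Q ≤ 1 := by
    rw [Finset.sum_mul, ← hsum1]
    calc ∑ j ∈ Finset.range (m+1), (n.choose j:ℝ) * Q
        ≤ ∑ j ∈ Finset.range (m+1), q^j * (1-q)^(n-j) * (n.choose j : ℝ) := by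
          refine Finset.sum_le_sum fun j hj => ?_
          have hj' := Nat.lt_succ_iff.1 (Finset.mem_range.1 hj)
          have := hterm j hj'
          have hch : (0:ℝ) ≤ (n.choose j : ℝ) := Nat.cast_nonneg _
          nlinarith
      _ ≤ ∑ j ∈ Finset.range (n+1), q^j * (1-q)^(n-j) * (n.choose j : ℝ) := by
          refine Finset.sum_le_sum_of_subset_of_nonneg
            (Finset.range_subset_range.2 (by omega)) fun j _ _ => ?_
          positivity
  have hlog : -((n:ℝ) * binEnt q * Real.log 2) ≤ Real.log Q := by
    rw [hQ, Real.log_mul (by positivity) (by positivity), Real.log_pow, Real.log_pow]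
    have hrw : -((n:ℝ) * binEnt q * Real.log 2)
        = (n:ℝ) * (q * Real.log q + (1-q) * Real.log (1-q)) := by
      have h' : (n:ℝ) * binEnt q * Real.log 2 = (n:ℝ) * (binEnt q * Real.log 2) := by ring
      rw [h', binEnt_mul_log2]; ring
    rw [hrw]
    have hcast : ((n - m : ℕ):ℝ) = (n:ℝ) - m := by
      rw [Nat.cast_sub hmn]
    rw [hcast]
    have hlq : Real.log q ≤ Real.log (1-q) := Real.log_le_log h0 hqle
    have hprod : 0 ≤ ((n:ℝ)*q - m) * (Real.log (1-q) - Real.log q) :=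
      mul_nonneg (by linarith) (by linarith)
    nlinarith [hprod]
  have hQge : (2:ℝ) ^ (-((n:ℝ) * binEnt q)) ≤ Q := by
    rw [Real.rpow_def_of_pos (by norm_num : (0:ℝ) < 2), ← Real.exp_log hQpos]
    apply Real.exp_le_exp.2
    calc Real.log 2 * -((n:ℝ) * binEnt q) = -((n:ℝ) * binEnt q * Real.log 2) := by ring
      _ ≤ Real.log Q := hlog
  have hS : ((∑ j ∈ Finset.range (m+1), n.choose j : ℕ) : ℝ)
      ≤ ((2:ℝ) ^ (-((n:ℝ) * binEnt q)))⁻¹ := by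
    push_cast
    have hs1 : (∑ j ∈ Finset.range (m+1), (n.choose j:ℝ)) ≤ Q⁻¹ := by
      rw [← one_div]
      rw [le_div_iff₀ hQpos]
      exact hstepA
    refine hs1.trans ?_
    exact inv_anti₀ (Real.rpow_pos_of_pos (by norm_num) _) hQge
  rwa [← Real.rpow_neg (by norm_num : (0:ℝ) ≤ 2), neg_neg] at hS


section chunk7
open Finset

lemma four_rpow (y : ℝ) : (4:ℝ)^y = (2:ℝ)^(2*y) := by
  have h24 : (4:ℝ) = (2:ℝ) ^ ((2:ℕ):ℝ) := by rw [Real.rpow_natCast]; norm_num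
  rw [h24, ← Real.rpow_mul (by norm_num : (0:ℝ) ≤ 2)]
  norm_num

lemma choose_bound (n k : ℕ) (p : ℝ) (h0 : 0 < p) (h2 : p ≤ 1/2) (hk : (k:ℝ) ≤ p*n) :
    ((n.choose k : ℕ):ℝ) ≤ (2:ℝ) ^ ((n:ℝ) * binEnt p) := by
  refine le_trans ?_ (tail_bound n k p h0 h2 hk)
  have : n.choose k ≤ ∑ j ∈ Finset.range (k+1), n.choose j :=
    Finset.single_le_sum (f := fun j => n.choose j) (fun _ _ => Nat.zero_le _)
      (Finset.self_mem_range_succ k)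
  exact_mod_cast this

lemma binEnt_quarter : binEnt (1/4 : ℝ) = 2 - (3/4) * Real.logb 2 3 := by
  unfold binEnt
  have h4 : Real.logb 2 (4:ℝ) = 2 := by
    rw [show (4:ℝ) = 2^(2:ℕ) by norm_num, Real.logb_pow, Real.logb_self_eq_one] <;> norm_num
  have h1 : Real.logb 2 ((1:ℝ)/4) = -2 := by
    rw [show (1:ℝ)/4 = (4:ℝ)⁻¹ by norm_num, Real.logb_inv, h4]
  have h2 : (1:ℝ) - 1/4 = 3/4 := by norm_num
  have h3 : Real.logb 2 ((3:ℝ)/4) = Real.logb 2 3 - 2 := by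
    rw [Real.logb_div (by norm_num) (by norm_num), h4]
  rw [h2, h1, h3]
  ring

lemma cast_min_pow (n e : ℕ) :
    ((min (2^n) (2^n - mcount n e) : ℕ) : ℝ) ≤ ((2^n - mcount n e : ℕ) : ℝ) := by
  exact_mod_cast min_le_right _ _

lemma term_bound (n e : ℕ) (he : e < n) :
    ((n.choose ((e+1)/2) * min (2^n) (2^n - mcount n e) : ℕ) : ℝ)
      ≤ (4:ℝ) ^ (gam * (n:ℝ)) := by
  have hn1 : 1 ≤ n := by omega
  have hnr : (1:ℝ) ≤ (n:ℝ) := by exact_mod_cast hn1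
  have hgam : (10:ℝ)/11 ≤ gam := gam_ge_num
  have hL : (52:ℝ)/33 ≤ Real.logb 2 3 := logb23_ge
  have hgamL : Real.logb 2 3 - 2/3 ≤ gam := gam_ge
  rw [four_rpow]
  have hkr : (((e+1)/2 : ℕ):ℝ) ≤ ((e:ℝ)+1)/2 := by
    exact_mod_cast Nat.cast_div_le (α := ℝ) (m := e+1) (n := 2)
  rw [Nat.cast_mul]
  rcases Nat.lt_or_ge (2*(e+1)) (n+1) with hcase | hcase
  · -- 2(e+1) ≤ n
    have hA : 2*(e+1) ≤ n := by omega
    have hc1 : ((n.choose ((e+1)/2) : ℕ):ℝ) ≤ (2:ℝ) ^ ((n:ℝ) * binEnt (1/4)) := by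
      refine choose_bound n _ (1/4) (by norm_num) (by norm_num) ?_
      have : ((e:ℝ)+1) ≤ (n:ℝ)/2 := by
        have : ((2*(e+1):ℕ):ℝ) ≤ (n:ℝ) := by exact_mod_cast hA
        push_cast at this
        linarith
      linarith [hkr]
    have hc2 : ((min (2^n) (2^n - mcount n e) : ℕ) : ℝ) ≤ (2:ℝ) ^ ((n:ℝ)) := by
      have h1 : ((min (2^n) (2^n - mcount n e) : ℕ) : ℝ) ≤ ((2^n : ℕ):ℝ) := by
        exact_mod_cast min_le_left _ _
      rw [show ((2:ℝ)^((n:ℝ))) = ((2:ℝ)^(n:ℕ)) from Real.rpow_natCast 2 n]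
      push_cast at h1 ⊢
      exact h1
    have hprod : ((n.choose ((e+1)/2) : ℕ):ℝ) * ((min (2^n) (2^n - mcount n e) : ℕ) : ℝ)
        ≤ (2:ℝ) ^ ((n:ℝ) * binEnt (1/4)) * (2:ℝ) ^ ((n:ℝ)) :=
      mul_le_mul hc1 hc2 (Nat.cast_nonneg _) (Real.rpow_pos_of_pos (by norm_num) _).le
    refine le_trans hprod ?_
    rw [← Real.rpow_add (by norm_num : (0:ℝ) < 2)]
    apply Real.rpow_le_rpow_of_exponent_le (by norm_num)
    have hq := binEnt_quarter
    have : binEnt (1/4) + 1 ≤ 2 * gam := by rw [hq]; linarith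
    nlinarith
  · -- n ≤ 2e+1
    have hB : n ≤ 2*e+1 := by omega
    rcases Nat.lt_or_ge (e+1) n with hlt | hge
    · -- case B : e+1 < n
      set ε : ℝ := ((n:ℝ) - ((e:ℝ)+1))/(2*(n:ℝ)) with hε
      have hnpos : (0:ℝ) < (n:ℝ) := by linarith
      have he1n : ((e:ℝ)+1) < (n:ℝ) := by exact_mod_cast hlt
      have hn2e : (n:ℝ) ≤ 2*(e:ℝ)+1 := by exact_mod_cast hB
      have hε0 : 0 < ε := by
        apply div_pos (by linarith) (by linarith)
      have hε4 : ε < 1/4 := by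
        rw [hε, div_lt_iff₀ (by linarith)]
        linarith
      have hq0 : 0 < 2*ε := by linarith
      have hq2 : 2*ε ≤ 1/2 := by linarith
      have hp0 : 0 < 1/2 - ε := by linarith
      have hp2 : 1/2 - ε ≤ 1/2 := by linarith
      have hqn : (2*ε) * (n:ℝ) = (n:ℝ) - ((e:ℝ)+1) := by
        rw [hε]; field_simp
      have hpn : (1/2 - ε) * (n:ℝ) = ((e:ℝ)+1)/2 := by
        rw [hε]; field_simp; ring
      -- choose part
      have hc1 : ((n.choose ((e+1)/2) : ℕ):ℝ) ≤ (2:ℝ) ^ ((n:ℝ) * binEnt (1/2 - ε)) := by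
        refine choose_bound n _ _ hp0 hp2 ?_
        rw [hpn]
        exact hkr
      -- tail part
      have hsub : 2^n - mcount n e = ∑ j ∈ range ((n-e-1)+1), n.choose j := by
        rw [sub_mcount e he, show n - e - 1 + 1 = n - e by omega]
      have hc2 : ((2^n - mcount n e : ℕ) : ℝ) ≤ (2:ℝ) ^ ((n:ℝ) * binEnt (2*ε)) := by
        rw [hsub]
        refine tail_bound n (n-e-1) (2*ε) hq0 hq2 ?_
        rw [hqn]
        have hc : ((n - e - 1 : ℕ):ℝ) = (n:ℝ) - ((e:ℝ)+1) := by
          have h1 : n - e - 1 = n - (e+1) := by omega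
          rw [h1, Nat.cast_sub (by omega : e+1 ≤ n)]
          push_cast
          ring
        rw [hc]
      have hmin : ((min (2^n) (2^n - mcount n e) : ℕ) : ℝ) ≤ ((2^n - mcount n e : ℕ):ℝ) := by
        exact_mod_cast min_le_right _ _
      have hprod : ((n.choose ((e+1)/2) : ℕ):ℝ) * ((min (2^n) (2^n - mcount n e) : ℕ) : ℝ)
          ≤ (2:ℝ) ^ ((n:ℝ) * binEnt (1/2 - ε)) * (2:ℝ) ^ ((n:ℝ) * binEnt (2*ε)) :=
        mul_le_mul hc1 (hmin.trans hc2) (Nat.cast_nonneg _)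
          (Real.rpow_pos_of_pos (by norm_num) _).le
    
      refine le_trans hprod ?_
      rw [← Real.rpow_add (by norm_num : (0:ℝ) < 2)]
      apply Real.rpow_le_rpow_of_exponent_le (by norm_num)
      have hf := f_le_gam ε hε0 hε4
      nlinarith
    · -- case C : e+1 = n
      have hen : e+1 = n := by omega
      have hsub : 2^n - mcount n e = 1 := by
        rw [sub_mcount e he, show n - e = 1 by omega]
        simp
      have hch : n.choose ((e+1)/2) ≤ 2^n := by
        have h1 : n.choose ((e+1)/2) ≤ ∑ j ∈ range (n+1), n.choose j :=
          Finset.single_le_sum (f := fun j => n.choose j) (fun _ _ => Nat.zero_le _)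
            (by rw [Finset.mem_range]; omega)
        rw [Nat.sum_range_choose n] at h1
        exact h1
      have h1 : (n.choose ((e+1)/2) * min (2^n) (2^n - mcount n e) : ℕ) ≤ 2^n := by
        rw [hsub]
        have : min (2^n) 1 ≤ 1 := min_le_right _ _
        calc n.choose ((e+1)/2) * min (2^n) 1 ≤ n.choose ((e+1)/2) * 1 :=
            Nat.mul_le_mul_left _ this
          _ ≤ 2^n := by rw [mul_one]; exact hch
      have h2 : ((2^n : ℕ):ℝ) ≤ (2:ℝ) ^ (2*(gam*(n:ℝ))) := by
        rw [show ((2^n : ℕ):ℝ) = (2:ℝ)^((n:ℕ):ℝ) by rw [Real.rpow_natCast]; push_cast; ring]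
        apply Real.rpow_le_rpow_of_exponent_le (by norm_num)
        nlinarith
      refine le_trans ?_ h2
      exact_mod_cast h1
end chunk7


end CLP

theorem progressionFree_card_lt (n : ℕ) (hn : 1 ≤ n)
    (A : Finset (Fin n → ZMod 4)) (hA : ProgressionFree (A : Set (Fin n → ZMod 4))) :
    (A.card : ℝ) < ((n : ℝ) + 2) * (4 : ℝ) ^ (gam * n) := by
  classical
  have hkey := CLP.key_nat A hA
  have hcast : (A.card : ℝ) ≤ ((2 * 2^n : ℕ):ℝ) + ∑ e ∈ Finset.range n,
      ((n.choose ((e+1)/2) * min (2^n) (2^n - CLP.mcount n e) : ℕ) : ℝ) := by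
    have h := (Nat.cast_le (α := ℝ)).2 hkey
    rw [Nat.cast_add, Nat.cast_sum] at h
    exact h
  have hterm : ∀ e ∈ Finset.range n,
      ((n.choose ((e+1)/2) * min (2^n) (2^n - CLP.mcount n e) : ℕ) : ℝ)
        ≤ (4:ℝ) ^ (gam * (n:ℝ)) := fun e he => CLP.term_bound n e (Finset.mem_range.1 he)
  have hsum : ∑ e ∈ Finset.range n,
      ((n.choose ((e+1)/2) * min (2^n) (2^n - CLP.mcount n e) : ℕ) : ℝ)
        ≤ (n:ℝ) * (4:ℝ) ^ (gam * (n:ℝ)) := by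
    calc ∑ e ∈ Finset.range n, ((n.choose ((e+1)/2) * min (2^n) (2^n - CLP.mcount n e) : ℕ) : ℝ)
        ≤ ∑ _e ∈ Finset.range n, (4:ℝ) ^ (gam * (n:ℝ)) := Finset.sum_le_sum hterm
      _ = (n:ℝ) * (4:ℝ) ^ (gam * (n:ℝ)) := by
          rw [Finset.sum_const, Finset.card_range, nsmul_eq_mul]
  have hgam : (10:ℝ)/11 ≤ gam := CLP.gam_ge_num
  have hnr : (1:ℝ) ≤ (n:ℝ) := by exact_mod_cast hn
  have h2n : ((2 * 2^n : ℕ):ℝ) < 2 * (4:ℝ) ^ (gam * (n:ℝ)) := by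
    push_cast
    have hlt : (2:ℝ)^((n:ℕ):ℝ) < (2:ℝ)^(2*gam*(n:ℝ)) := by
      apply Real.rpow_lt_rpow_of_exponent_lt (by norm_num)
      nlinarith
    rw [Real.rpow_natCast] at hlt
    rw [CLP.four_rpow]
    have : 2*(gam * (n:ℝ)) = 2*gam*(n:ℝ) := by ring
    rw [this]
    linarith
  have hfinal : (A.card : ℝ) < 2 * (4:ℝ) ^ (gam * (n:ℝ)) + (n:ℝ) * (4:ℝ) ^ (gam * (n:ℝ)) := by
    linarith
  calc (A.card : ℝ) < 2 * (4:ℝ) ^ (gam * (n:ℝ)) + (n:ℝ) * (4:ℝ) ^ (gam * (n:ℝ)) := hfinal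
    _ = ((n : ℝ) + 2) * (4 : ℝ) ^ (gam * n) := by ring
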